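/- Let Λ be a finite index set, p : Λ → ℝ with p(λ) ≥ 0 and ∑_λ p(λ) = 1, let ρ_λ be 2×2 density matrices for each λ ∈ Λ, and let q_x, q_y : Λ → ℝ with 0 ≤ q_x(λ) ≤ 1 and 0 ≤ q_y(λ) ≤ 1. Define the local-hidden-state ensemble averages σ₊ˣ = ∑_λ p(λ)·q_x(λ)·ρ_λ, σ₋ˣ = ∑_λ p(λ)·(1 − q_x(λ))·ρ_λ, σ₊ʸ = ∑_λ p(λ)·q_y(λ)·ρ_λ, σ₋ʸ = ∑_λ p(λ)·(1 − q_y(λ))·ρ_λ. Then 𝓘ʸ(σ₊ˣ) + 𝓘ʸ(σ₋ˣ) + 𝓘ˣ(σ₊ʸ) + 𝓘ˣ(σ₋ʸ) ≤ √2. (This is the imaginarity steering inequality: any assemblage admitting a local hidden state model satisfies it.) -/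

import Mathlib

open Matrix Kronecker
open scoped ComplexOrder

/-- Trace norm of a square complex matrix: `Tr[sqrt(Aᴴ A)]`. -/
noncomputable def traceNorm {n : Type*} [Fintype n] [DecidableEq n]
    (A : Matrix n n ℂ) : ℝ :=
  (((Matrix.posSemidef_conjTranspose_mul_self A).1.eigenvectorUnitary.1 *
      Matrix.diagonal (fun i => ((Real.sqrt ((Matrix.posSemidef_conjTranspose_mul_self A).1.eigenvalues i) : ℝ) : ℂ)) *
      (star (Matrix.posSemidef_conjTranspose_mul_self A).1.eigenvectorUnitary :
        Matrix n n ℂ)).trace).re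

/-- Robustness of imaginarity: `(1/2) ‖ρ - ρᵀ‖₁`. -/
noncomputable def roi {n : Type*} [Fintype n] [DecidableEq n]
    (ρ : Matrix n n ℂ) : ℝ :=
  (1 / 2) * traceNorm (ρ - ρ.transpose)

/-- Hadamard matrix (x-basis change). -/
noncomputable def Hm : Matrix (Fin 2) (Fin 2) ℂ :=
  (Real.sqrt 2 : ℂ)⁻¹ • !![1, 1; 1, -1]
/-- Eigenvector matrix of σy (y-basis change). -/
noncomputable def Vm : Matrix (Fin 2) (Fin 2) ℂ :=
  (Real.sqrt 2 : ℂ)⁻¹ • !![1, 1; Complex.I, -Complex.I]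

/-- Robustness of imaginarity in the x-basis. -/
noncomputable def roiX (σ : Matrix (Fin 2) (Fin 2) ℂ) : ℝ := roi (Hm * σ * Hm)
/-- Robustness of imaginarity in the y-basis. -/
noncomputable def roiY (σ : Matrix (Fin 2) (Fin 2) ℂ) : ℝ := roi (Vmᴴ * σ * Vm)

lemma traceNorm_skew (x : ℂ) :
    traceNorm !![0, x; -x, 0] = 2 * ‖x‖ := by
  have h1 : (!![0, x; -x, 0] : Matrix (Fin 2) (Fin 2) ℂ)ᴴ * !![0, x; -x, 0]
      = ((‖x‖ ^ 2 : ℝ) : ℂ) • (1 : Matrix (Fin 2) (Fin 2) ℂ) := by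
    ext i j
    fin_cases i <;> fin_cases j <;>
      simp [Matrix.mul_apply, Fin.sum_univ_two, Complex.sq_norm, Complex.normSq_eq_conj_mul_self]
  have hs : spectrum ℝ ((!![0, x; -x, 0] : Matrix (Fin 2) (Fin 2) ℂ)ᴴ * !![0, x; -x, 0])
      = {‖x‖ ^ 2} := by
    rw [h1, show ((‖x‖ ^ 2 : ℝ) : ℂ) • (1 : Matrix (Fin 2) (Fin 2) ℂ)
      = algebraMap ℝ (Matrix (Fin 2) (Fin 2) ℂ) (‖x‖ ^ 2) by
    rw [Algebra.algebraMap_eq_smul_one]; ext i j; simp, spectrum.scalar_eq]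
  have hev : ∀ i, (Matrix.posSemidef_conjTranspose_mul_self
      (!![0, x; -x, 0] : Matrix (Fin 2) (Fin 2) ℂ)).1.eigenvalues i = ‖x‖ ^ 2 := by
    intro i
    have := (Matrix.posSemidef_conjTranspose_mul_self
      (!![0, x; -x, 0] : Matrix (Fin 2) (Fin 2) ℂ)).1.eigenvalues_mem_spectrum_real i
    rw [hs] at this
    exact this
  simp only [traceNorm]
  rw [Matrix.trace_mul_cycle, Unitary.coe_star_mul_self, one_mul, Matrix.trace_diagonal]
  simp only [hev, Real.sqrt_sq (norm_nonneg x), Fin.sum_univ_two]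
  simp only [Complex.add_re, Complex.ofReal_re]
  ring

lemma roi_eq (M : Matrix (Fin 2) (Fin 2) ℂ) :
    roi M = ‖M 0 1 - M 1 0‖ := by
  have h : M - M.transpose = !![0, M 0 1 - M 1 0; -(M 0 1 - M 1 0), 0] := by
    ext i j
    fin_cases i <;> fin_cases j <;> simp [neg_sub]
  rw [roi, h, traceNorm_skew]
  ring

lemma s2ne : ((Real.sqrt 2 : ℝ) : ℂ) ≠ 0 :=
  Complex.ofReal_ne_zero.mpr (by positivity)

lemma s2sq : ((Real.sqrt 2 : ℝ) : ℂ) * ((Real.sqrt 2 : ℝ) : ℂ) = 2 := by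
  norm_cast
  exact Real.mul_self_sqrt (by norm_num)

lemma roiX_eq (σ : Matrix (Fin 2) (Fin 2) ℂ) :
    roiX σ = ‖σ 1 0 - σ 0 1‖ := by
  rw [roiX, roi_eq]
  congr 1
  simp only [Hm, Matrix.mul_apply, Fin.sum_univ_two, Matrix.smul_apply, smul_eq_mul,
    Matrix.cons_val', Matrix.cons_val_zero, Matrix.cons_val_one, Matrix.head_cons,
    Matrix.head_fin_const, Matrix.empty_val', Matrix.cons_val_fin_one, Matrix.of_apply]
  field_simp
  rw [show ((Real.sqrt 2:ℝ):ℂ) ^ 2 = 2 by rw [sq]; exact s2sq]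
  ring

lemma roiY_eq (σ : Matrix (Fin 2) (Fin 2) ℂ) :
    roiY σ = ‖σ 0 1 + σ 1 0‖ := by
  rw [roiY, roi_eq]
  have hVH : Vmᴴ = (Real.sqrt 2 : ℂ)⁻¹ • !![1, -Complex.I; 1, Complex.I] := by
    ext i j
    fin_cases i <;> fin_cases j <;>
      simp [Vm, Matrix.conjTranspose_apply, Complex.ext_iff]
  have : (Vmᴴ * σ * Vm) 0 1 - (Vmᴴ * σ * Vm) 1 0 = -Complex.I * (σ 0 1 + σ 1 0) := by
    rw [hVH]
    simp only [Vm, Matrix.mul_apply, Fin.sum_univ_two,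
      Matrix.smul_apply, smul_eq_mul, Matrix.cons_val', Matrix.cons_val_zero,
      Matrix.cons_val_one, Matrix.head_cons, Matrix.empty_val', Matrix.cons_val_fin_one, Matrix.of_apply]
    field_simp
    rw [show ((Real.sqrt 2:ℝ):ℂ) ^ 2 = 2 by rw [sq]; exact s2sq]
    ring
  rw [this]
  simp

lemma psd_entry_bound {ρ : Matrix (Fin 2) (Fin 2) ℂ} (h : ρ.PosSemidef)
    (htr : ρ.trace = 1) :
    2 * (|(ρ 0 1).re| + |(ρ 0 1).im|) ≤ Real.sqrt 2 := by
  have hherm : ρ 1 0 = starRingEnd ℂ (ρ 0 1) := by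
    have := congrFun (congrFun h.1 1) 0
    simpa [Matrix.conjTranspose_apply] using this.symm
  have htr' : (ρ 0 0).re + (ρ 1 1).re = 1 := by
    have : ρ.trace = ρ 0 0 + ρ 1 1 := by
      simp [Matrix.trace, Matrix.diag, Fin.sum_univ_two]
    rw [this] at htr
    have := congrArg Complex.re htr
    simpa using this
  set r := (ρ 0 1).re
  set m := (ρ 0 1).im
  have key : ∀ s t : ℝ, s ^ 2 = 1 → t ^ 2 = 1 →
      0 ≤ 1 + Real.sqrt 2 * (r * s - m * t) := by
    intro s t hs ht
    have hq := h.dotProduct_mulVec_nonneg (![((Real.sqrt 2 : ℝ) : ℂ), (s : ℂ) + (t : ℂ) * Complex.I] : Fin 2 → ℂ)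
    rw [Complex.le_def] at hq
    have hre := hq.1
    simp only [dotProduct, Matrix.mulVec, Fin.sum_univ_two, Pi.star_apply,
      Matrix.cons_val_zero, Matrix.cons_val_one, Matrix.head_cons, hherm] at hre
    simp [Complex.add_re, Complex.mul_re, Complex.mul_im, Complex.conj_re, Complex.conj_im] at hre
    have h2 : Real.sqrt 2 * Real.sqrt 2 = 2 := Real.mul_self_sqrt (by norm_num)
    have hre' : 0 ≤ 2 * (ρ 0 0).re + 2 * (ρ 1 1).re
        + 2 * Real.sqrt 2 * (r * s - m * t) := by
      convert hre using 1
      linear_combination -(ρ 0 0).re * h2 - (ρ 1 1).re * hs - (ρ 1 1).re * ht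
    nlinarith [hre', htr']
  have hs2 : (0:ℝ) < Real.sqrt 2 := by positivity
  have h2 : Real.sqrt 2 * Real.sqrt 2 = 2 := Real.mul_self_sqrt (by norm_num)
  rcases abs_cases r with ⟨hr, _⟩ | ⟨hr, _⟩ <;> rcases abs_cases m with ⟨hm, _⟩ | ⟨hm, _⟩
  · have := key (-1) 1 (by norm_num) (by norm_num); nlinarith
  · have := key (-1) (-1) (by norm_num) (by norm_num); nlinarith
  · have := key 1 1 (by norm_num) (by norm_num); nlinarith
  · have := key 1 (-1) (by norm_num) (by norm_num); nlinarith

lemma abs_sum_mul_le {Λ : Type*} [Fintype Λ] (c f : Λ → ℝ) (hc : ∀ l, 0 ≤ c l) :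
    |∑ l, c l * f l| ≤ ∑ l, c l * |f l| := by
  refine (Finset.abs_sum_le_sum_abs _ _).trans ?_
  refine Finset.sum_le_sum fun l _ => ?_
  rw [abs_mul, abs_of_nonneg (hc l)]

/-- any assemblage admitting a local hidden state model satisfies the
imaginarity steering inequality. -/
theorem stmt7 {Λ : Type*} [Fintype Λ] (p qx qy : Λ → ℝ)
    (ρ : Λ → Matrix (Fin 2) (Fin 2) ℂ)
    (hp : ∀ l, 0 ≤ p l) (hpsum : ∑ l, p l = 1)
    (hρ : ∀ l, (ρ l).PosSemidef) (hρtr : ∀ l, (ρ l).trace = 1)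
    (hqx0 : ∀ l, 0 ≤ qx l) (hqx1 : ∀ l, qx l ≤ 1)
    (hqy0 : ∀ l, 0 ≤ qy l) (hqy1 : ∀ l, qy l ≤ 1) :
    roiY (∑ l, ((p l * qx l : ℝ) : ℂ) • ρ l)
      + roiY (∑ l, ((p l * (1 - qx l) : ℝ) : ℂ) • ρ l)
      + roiX (∑ l, ((p l * qy l : ℝ) : ℂ) • ρ l)
      + roiX (∑ l, ((p l * (1 - qy l) : ℝ) : ℂ) • ρ l) ≤ Real.sqrt 2 := by
  have hherm : ∀ l, ρ l 1 0 = starRingEnd ℂ (ρ l 0 1) := by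
    intro l
    have := congrFun (congrFun (hρ l).1 1) 0
    simpa [Matrix.conjTranspose_apply] using this.symm
  set r : Λ → ℝ := fun l => (ρ l 0 1).re with hr
  set m : Λ → ℝ := fun l => (ρ l 0 1).im with hm
  -- reduce roiY terms
  have eY : ∀ c : Λ → ℝ, roiY (∑ l, ((c l : ℝ) : ℂ) • ρ l) = |∑ l, c l * (2 * r l)| := by
    intro c
    rw [roiY_eq]
    have : (∑ l, ((c l : ℝ) : ℂ) • ρ l) 0 1 + (∑ l, ((c l : ℝ) : ℂ) • ρ l) 1 0
        = ((∑ l, c l * (2 * r l) : ℝ) : ℂ) := by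
      simp only [Matrix.sum_apply, Matrix.smul_apply, smul_eq_mul, ← Finset.sum_add_distrib]
      push_cast
      refine Finset.sum_congr rfl fun l _ => ?_
      rw [hherm l, ← mul_add, Complex.add_conj]
      push_cast
      ring
    rw [this, Complex.norm_real, Real.norm_eq_abs]
  have eX : ∀ c : Λ → ℝ, roiX (∑ l, ((c l : ℝ) : ℂ) • ρ l) = |∑ l, c l * (2 * m l)| := by
    intro c
    rw [roiX_eq]
    have : (∑ l, ((c l : ℝ) : ℂ) • ρ l) 1 0 - (∑ l, ((c l : ℝ) : ℂ) • ρ l) 0 1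
        = -Complex.I * ((∑ l, c l * (2 * m l) : ℝ) : ℂ) := by
      simp only [Matrix.sum_apply, Matrix.smul_apply, smul_eq_mul, ← Finset.sum_sub_distrib]
      push_cast
      rw [Finset.mul_sum]
      refine Finset.sum_congr rfl fun l _ => ?_
      rw [hherm l, ← mul_sub, ← neg_sub (ρ l 0 1), Complex.sub_conj]
      push_cast
      ring
    rw [this]
    rw [show ‖(-Complex.I * ((∑ l, c l * (2 * m l) : ℝ) : ℂ))‖
        = ‖(-Complex.I)‖ * ‖(((∑ l, c l * (2 * m l) : ℝ) : ℂ))‖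
      from norm_mul _ _]
    rw [Complex.norm_real, Real.norm_eq_abs]
    simp
  rw [eY (fun l => p l * qx l), eY (fun l => p l * (1 - qx l)),
    eX (fun l => p l * qy l), eX (fun l => p l * (1 - qy l))]
  have b1 := abs_sum_mul_le (fun l => p l * qx l) (fun l => 2 * r l)
    (fun l => mul_nonneg (hp l) (hqx0 l))
  have b2 := abs_sum_mul_le (fun l => p l * (1 - qx l)) (fun l => 2 * r l)
    (fun l => mul_nonneg (hp l) (by linarith [hqx1 l]))
  have b3 := abs_sum_mul_le (fun l => p l * qy l) (fun l => 2 * m l)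
    (fun l => mul_nonneg (hp l) (hqy0 l))
  have b4 := abs_sum_mul_le (fun l => p l * (1 - qy l)) (fun l => 2 * m l)
    (fun l => mul_nonneg (hp l) (by linarith [hqy1 l]))
  have combine : (∑ l, p l * qx l * |2 * r l|) + (∑ l, p l * (1 - qx l) * |2 * r l|)
      + (∑ l, p l * qy l * |2 * m l|) + (∑ l, p l * (1 - qy l) * |2 * m l|)
      = ∑ l, p l * (|2 * r l| + |2 * m l|) := by
    rw [← Finset.sum_add_distrib, ← Finset.sum_add_distrib, ← Finset.sum_add_distrib]
    exact Finset.sum_congr rfl fun l _ => by ring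
  have last : ∑ l, p l * (|2 * r l| + |2 * m l|) ≤ Real.sqrt 2 := by
    have step : ∑ l, p l * (|2 * r l| + |2 * m l|) ≤ ∑ l, p l * Real.sqrt 2 := by
      refine Finset.sum_le_sum fun l _ => mul_le_mul_of_nonneg_left ?_ (hp l)
      have := psd_entry_bound (hρ l) (hρtr l)
      rw [abs_mul, abs_mul, abs_two]
      linarith
    rw [← Finset.sum_mul, hpsum, one_mul] at step
    exact step
  linarith [b1, b2, b3, b4, combine, last]
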